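/- arXiv:1907.10807 — 3 statements merged into one kernel-verified Lean document; each statement's English description precedes it below -/
import Mathlib

section
/- Let z : ℕ → ℂ satisfy the Newton–Raphson recursion z(n+1) = (z(n)² − 1)/(2·z(n)) for all n, with initial condition satisfying Im(z(0)) > 0. Then the sequence z(n) converges to i as n → ∞. -/
open Complex Filter

/-- The Newton–Raphson iteration for `z² + 1` started in the open upper half-plane
converges to the root `i`. -/
theorem newton_converges_to_i
    (z : ℕ → ℂ) (hrec : ∀ n : ℕ, z (n + 1) = (z n ^ 2 - 1) / (2 * z n))
    (h0 : 0 < (z 0).im) :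
    Filter.Tendsto z Filter.atTop (nhds Complex.I) := by
  -- positivity of imaginary part along the iteration
  have him : ∀ n, 0 < (z n).im := by
    intro n
    induction n with
    | zero => exact h0
    | succ k ih =>
      rw [hrec k]
      set x := (z k).re
      set y := (z k).im
      have hns : 0 < x ^ 2 + y ^ 2 := by nlinarith [sq_nonneg x, mul_pos ih ih]
      have hd : x ^ 2 + y ^ 2 ≠ 0 := ne_of_gt hns
      have : ((z k ^ 2 - 1) / (2 * z k)).im
          = (2 * y * (x ^ 2 + y ^ 2 + 1)) / (4 * (x ^ 2 + y ^ 2)) := by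
        rw [div_im]
        simp only [Complex.normSq_apply, Complex.mul_re, Complex.mul_im, Complex.sub_re,
          Complex.sub_im, Complex.one_re, Complex.one_im, pow_two]
        simp only [Complex.re_ofNat, Complex.im_ofNat, show (z k).re = x from rfl, show (z k).im = y from rfl,
          mul_zero, zero_mul, sub_zero, add_zero]
        have hd4 : 2 * x * (2 * x) + 2 * y * (2 * y) ≠ 0 := by intro h; apply hd; linarith
        field_simp
        ring
      rw [this]
      positivity
  have hz0 : ∀ n, z n ≠ 0 := fun n h => by
    have := him n; rw [h] at this; simp at this
  have hzI : ∀ n, z n + I ≠ 0 := fun n h => by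
    have h1 : (z n + I).im = (z n).im + 1 := by simp
    rw [h] at h1
    have := him n
    simp at h1; linarith
  set w : ℕ → ℂ := fun n => (z n - I) / (z n + I) with hw
  have hwsq : ∀ n, w (n + 1) = (w n) ^ 2 := by
    intro n
    have h1 : (2 : ℂ) * z n ≠ 0 := by simpa using hz0 n
    show (z (n+1) - I) / (z (n+1) + I) = ((z n - I) / (z n + I)) ^ 2
    rw [div_pow, div_eq_div_iff (hzI (n+1)) (pow_ne_zero 2 (hzI n)), hrec n]
    field_simp [hz0 n]
    linear_combination (-4 * z n * Complex.I) * Complex.I_sq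
  -- w n = w 0 ^ (2 ^ n)
  have hwpow : ∀ n, w n = w 0 ^ (2 ^ n) := by
    intro n
    induction n with
    | zero => simp
    | succ k ih => rw [hwsq k, ih, ← pow_mul, pow_succ]
  -- ‖w 0‖ < 1
  have hnorm : ‖w 0‖ < 1 := by
    have hpos : (0:ℝ) < ‖z 0 + I‖ := norm_pos_iff.mpr (hzI 0)
    have hsq : ‖z 0 - I‖ ^ 2 < ‖z 0 + I‖ ^ 2 := by
      simp only [Complex.sq_norm, Complex.normSq_apply, Complex.sub_re,
        Complex.sub_im, Complex.add_re, Complex.add_im, Complex.I_re, Complex.I_im]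
      nlinarith [h0]
    have hlt : ‖z 0 - I‖ < ‖z 0 + I‖ := lt_of_pow_lt_pow_left₀ 2 (norm_nonneg _) hsq
    simp only [hw, norm_div]
    rw [div_lt_one hpos]
    exact hlt
  -- w tends to 0
  have hw0 : Tendsto w atTop (nhds 0) := by
    have h1 : Tendsto (fun k : ℕ => w 0 ^ k) atTop (nhds 0) :=
      tendsto_pow_atTop_nhds_zero_of_norm_lt_one hnorm
    have h2 : Tendsto (fun n : ℕ => 2 ^ n) atTop atTop :=
      tendsto_pow_atTop_atTop_of_one_lt one_lt_two
    have h3 := h1.comp h2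
    refine h3.congr fun n => ?_
    simp [Function.comp, ← hwpow n]
  -- recover z from w
  have hwne : ∀ n, (1 : ℂ) - w n ≠ 0 := by
    intro n h
    rw [sub_eq_zero] at h
    have h2 := hzI n
    rw [hw] at h
    rw [eq_div_iff h2, one_mul] at h
    have : (2 : ℂ) * I = 0 := by linear_combination h
    simp at this
  have hzw : ∀ n, z n = I * (1 + w n) / (1 - w n) := by
    intro n
    rw [eq_div_iff (hwne n)]
    have h2 := hzI n
    simp only [hw]
    field_simp
    ring
  have hfin : Tendsto (fun n => I * (1 + w n) / (1 - w n)) atTop (nhds I) := by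
    have := ((tendsto_const_nhds (x := I)).mul
      ((tendsto_const_nhds (x := (1:ℂ))).add hw0)).div
      ((tendsto_const_nhds (x := (1:ℂ))).sub hw0) (by simp)
    simp only [mul_one, add_zero, sub_zero, div_one] at this
    exact this
  exact hfin.congr fun n => (hzw n).symm
end

section
/- Let z : ℕ → ℂ satisfy the Newton–Raphson recursion z(n+1) = (z(n)² − 1)/(2·z(n)) for all n, with initial condition satisfying Im(z(0)) < 0. Then the sequence z(n) converges to −i as n → ∞. -/
/-- The Newton–Raphson iteration for `z² + 1` started in the open lower half-plane
converges to the root `−i`. -/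
theorem newton_converges_to_neg_i
    (z : ℕ → ℂ) (hrec : ∀ n : ℕ, z (n + 1) = (z n ^ 2 - 1) / (2 * z n))
    (h0 : (z 0).im < 0) :
    Filter.Tendsto z Filter.atTop (nhds (-Complex.I)) := by
  have him : ∀ n, (z n).im < 0 := by
    intro n
    induction n with
    | zero => exact h0
    | succ n ih =>
      have hz : z n ≠ 0 := fun h => by simp [h] at ih
      have heq : (z n ^ 2 - 1) / (2 * z n) = z n / 2 - (2 * z n)⁻¹ := by
        field_simp
      rw [hrec, heq]
      have h1 : (z n / 2).im = (z n).im / 2 := by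
        simp [Complex.div_im, Complex.normSq_apply]
      have hm : (2 * z n).im = 2 * (z n).im := by
        simp [Complex.mul_im]
      have h2 : ((2 * z n)⁻¹).im = -(2 * (z n).im) / Complex.normSq (2 * z n) := by
        rw [Complex.inv_im, hm]
      have hpos : 0 < Complex.normSq (2 * z n) :=
        Complex.normSq_pos.mpr (mul_ne_zero two_ne_zero hz)
      rw [Complex.sub_im, h1, h2]
      have hgt : 0 < -(2 * (z n).im) / Complex.normSq (2 * z n) :=
        div_pos (by linarith) hpos
      linarith
  have hz : ∀ n, z n ≠ 0 := fun n h => by have := him n; simp [h] at this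
  have hsub : ∀ n, z n - Complex.I ≠ 0 := by
    intro n h
    have h1 : (z n - Complex.I).im = (z n).im - 1 := by simp
    rw [h] at h1
    simp at h1
    linarith [him n]
  set w : ℕ → ℂ := fun n => (z n + Complex.I) / (z n - Complex.I) with hw
  have hsq : ∀ n, w (n + 1) = w n ^ 2 := by
    intro n
    have h1 : z (n + 1) + Complex.I = (z n + Complex.I) ^ 2 / (2 * z n) := by
      rw [hrec]; field_simp [hz n]; linear_combination -Complex.I_sq
    have h2 : z (n + 1) - Complex.I = (z n - Complex.I) ^ 2 / (2 * z n) := by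
      rw [hrec]; field_simp [hz n]; linear_combination -Complex.I_sq
    simp only [hw, h1, h2]
    rw [div_pow]
    rw [div_div_div_comm]
    rw [div_self (mul_ne_zero two_ne_zero (hz n)), div_one]
  have hpow : ∀ n, w n = w 0 ^ (2 ^ n) := by
    intro n
    induction n with
    | zero => simp
    | succ n ih => rw [hsq, ih, ← pow_mul, pow_succ]
  have habs : ‖w 0‖ < 1 := by
    have hlt : Complex.normSq (z 0 + Complex.I) < Complex.normSq (z 0 - Complex.I) := by
      simp [Complex.normSq_apply]
      nlinarith [him 0]
    have h2 : ‖z 0 + Complex.I‖ < ‖z 0 - Complex.I‖ := by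
      rw [Complex.norm_def, Complex.norm_def]
      exact Real.sqrt_lt_sqrt (Complex.normSq_nonneg _) hlt
    rw [hw]
    simp only [norm_div]
    rw [div_lt_one (norm_pos_iff.mpr (hsub 0))]
    exact h2
  have hw0 : Filter.Tendsto w Filter.atTop (nhds 0) := by
    have h1 : Filter.Tendsto (fun n : ℕ => ‖w 0‖ ^ n) Filter.atTop (nhds 0) :=
      tendsto_pow_atTop_nhds_zero_of_lt_one (by positivity) habs
    have h2 : Filter.Tendsto (fun n : ℕ => (2 : ℕ) ^ n) Filter.atTop Filter.atTop :=
      tendsto_pow_atTop_atTop_of_one_lt (by norm_num)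
    have h3 : Filter.Tendsto (fun n : ℕ => ‖w 0‖ ^ (2 ^ n)) Filter.atTop (nhds 0) :=
      h1.comp h2
    rw [tendsto_zero_iff_norm_tendsto_zero]
    refine h3.congr fun n => ?_
    rw [hpow n]
    simp [norm_pow]
  have hwne : ∀ n, 1 - w n ≠ 0 := by
    intro n h
    have he : w n = 1 := by linear_combination -h
    have hlt : ‖w n‖ < 1 := by
      rw [hpow n, norm_pow]
      exact pow_lt_one₀ (by positivity) habs (by positivity)
    rw [he] at hlt
    simp at hlt
  have hzw : ∀ n, z n = -Complex.I * (1 + w n) / (1 - w n) := by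
    intro n
    rw [eq_div_iff (hwne n)]
    simp only [hw]
    field_simp [hsub n]
    ring
  have hcont : ContinuousAt (fun v : ℂ => -Complex.I * (1 + v) / (1 - v)) 0 := by
    apply ContinuousAt.div
    · fun_prop
    · fun_prop
    · simp
  have hcomp := hcont.tendsto.comp hw0
  simp only [Function.comp_def] at hcomp
  have hval : -Complex.I * (1 + 0) / (1 - 0) = -Complex.I := by simp
  rw [hval] at hcomp
  exact hcomp.congr fun n => (hzw n).symm
end

section
/- Let z₀ ∈ ℝ with z₀ ≠ 0, set c₁ = arctan(−1/z₀), and let z : ℕ → ℝ satisfy z(0) = z₀ and the Newton–Raphson recursion z(n+1) = (z(n)² − 1)/(2·z(n)) for all n. If n ∈ ℕ is such that sin(2^k·c₁) ≠ 0 and cos(2^k·c₁) ≠ 0 for all k < n, then z(n) = −cot(2ⁿ·c₁). -/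
/-- With `c₁ = arctan (−1/z₀)`, the Newton–Raphson recursion
`z(n+1) = (z(n)² − 1)/(2 z(n))` started at `z(0) = z₀ ≠ 0` satisfies
`z(n) = −cot (2ⁿ c₁)`, provided `sin (2^k c₁) ≠ 0` and `cos (2^k c₁) ≠ 0`
for all `k < n`. -/
theorem newton_real_explicit_solution_arctan
    (z₀ : ℝ) (hz₀ : z₀ ≠ 0) (z : ℕ → ℝ) (h0 : z 0 = z₀)
    (hrec : ∀ n : ℕ, z (n + 1) = (z n ^ 2 - 1) / (2 * z n))
    (n : ℕ)
    (hdom : ∀ k < n,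
      Real.sin (2 ^ k * Real.arctan (-1 / z₀)) ≠ 0 ∧
      Real.cos (2 ^ k * Real.arctan (-1 / z₀)) ≠ 0) :
    z n = -Real.cot (2 ^ n * Real.arctan (-1 / z₀)) := by
  set c : ℝ := Real.arctan (-1 / z₀) with hc
  induction n with
  | zero =>
      have htan : Real.tan c = -1 / z₀ := Real.tan_arctan _
      have hcos : Real.cos c ≠ 0 := by
        have := Real.cos_arctan (-1 / z₀)
        rw [hc, this]
        positivity
      have hsin : Real.sin c ≠ 0 := by
        intro h
        have := Real.tan_eq_sin_div_cos c
        rw [h, zero_div] at this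
        rw [this] at htan
        field_simp at htan
        simp at htan
      rw [h0]
      have hsc : Real.sin c = (-1 / z₀) * Real.cos c := by
        have := Real.tan_eq_sin_div_cos c
        rw [htan] at this
        field_simp at this ⊢
        linarith
      simp only [pow_zero, one_mul]
      rw [Real.cot_eq_cos_div_sin, hsc]
      field_simp
  | succ n ih =>
      have hdom' : ∀ k < n, Real.sin (2 ^ k * c) ≠ 0 ∧ Real.cos (2 ^ k * c) ≠ 0 :=
        fun k hk => hdom k (Nat.lt_succ_of_lt hk)
      have hn := hdom n (Nat.lt_succ_self n)
      obtain ⟨hs, hcn⟩ := hn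
      have hz : z n = -Real.cot (2 ^ n * c) := ih hdom'
      set θ := (2 ^ n : ℝ) * c with hθ
      have h2 : (2 : ℝ) ^ (n + 1) * c = 2 * θ := by ring
      rw [hrec, hz, h2]
      rw [Real.cot_eq_cos_div_sin, Real.cot_eq_cos_div_sin,
        Real.sin_two_mul, Real.cos_two_mul']
      field_simp
end
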